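/- Let E be a finite directed graph without sinks and let u ∈ U_E. Then: (1) if u D_E u* ⊆ D_E, then λ_u(D_E) ⊆ D_E; and (2) if λ_u(D_E) = D_E, then u D_E u* ⊆ D_E. -/

import Mathlib

/-- A finite directed graph. -/
structure FinDirGraph where
  V : Type
  E : Type
  [instFV : Fintype V]
  [instFE : Fintype E]
  [instDV : DecidableEq V]
  [instDE : DecidableEq E]
  r : E → V
  s : E → V

attribute [instance] FinDirGraph.instFV FinDirGraph.instFE FinDirGraph.instDV FinDirGraph.instDE

namespace FinDirGraph

variable (G : FinDirGraph)

/-- `G.IsPathFrom v l` : the list of edges `l` forms a path starting at vertex `v`. -/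
def IsPathFrom : G.V → List G.E → Prop
  | _, [] => True
  | v, e :: l => G.s e = v ∧ IsPathFrom (G.r e) l

/-- The terminal vertex of a list of edges starting at `v`. -/
def rangeFrom : G.V → List G.E → G.V
  | v, [] => v
  | _, e :: l => rangeFrom (G.r e) l

/-- A finite path in the graph `G`; vertices are the paths of length `0`. -/
structure Path where
  src : G.V
  edges : List G.E
  ok : G.IsPathFrom src edges

variable {G}

/-- The length of a path. -/
def Path.len (μ : G.Path) : ℕ := μ.edges.length

/-- The range (terminal vertex) of a path. -/
def Path.rng (μ : G.Path) : G.V := G.rangeFrom μ.src μ.edges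

variable (G)

/-- `G` has no sinks: every vertex emits at least one edge. -/
def NoSinks : Prop := ∀ v : G.V, ∃ e : G.E, G.s e = v

/-- `G` has no sources: every vertex receives at least one edge. -/
def NoSources : Prop := ∀ v : G.V, ∃ e : G.E, G.r e = v

/-- Every loop in `G` has an exit. -/
def EveryLoopHasExit : Prop :=
  ∀ μ : G.Path, μ.edges ≠ [] → μ.src = μ.rng →
    ∃ e ∈ μ.edges, ∃ f g : G.E, f ≠ g ∧ G.s f = G.s e ∧ G.s g = G.s e

variable (A : Type) [CStarAlgebra A] [PartialOrder A] [StarOrderedRing A]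

/-- A Cuntz–Krieger `G`-family in a unital C*-algebra `A`. -/
structure CKFamily where
  P : G.V → A
  S : G.E → A
  proj_idem : ∀ v, P v * P v = P v
  proj_sa : ∀ v, star (P v) = P v
  orth : ∀ v w, v ≠ w → P v * P w = 0
  ck1 : ∀ e, star (S e) * S e = P (G.r e)
  ck1' : ∀ e f, e ≠ f → star (S e) * S f = 0
  ck2 : ∀ e, S e * star (S e) ≤ P (G.s e)
  ck3 : ∀ v : G.V, (∃ e, G.s e = v) →
    P v = ∑ e ∈ Finset.univ.filter (fun e => G.s e = v), S e * star (S e)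

variable {G A}

/-- The partial isometry `S_μ` associated to a finite path, defined from the source. -/
def CKFamily.sFrom (F : CKFamily G A) : G.V → List G.E → A
  | v, [] => F.P v
  | _, e :: l => F.S e * F.sFrom (G.r e) l

/-- `S_μ` for a path `μ`. -/
def CKFamily.sPath (F : CKFamily G A) (μ : G.Path) : A := F.sFrom μ.src μ.edges

/-- `P_μ = S_μ S_μ*` for a path `μ`. -/
def CKFamily.pPath (F : CKFamily G A) (μ : G.Path) : A :=
  F.sPath μ * star (F.sPath μ)

variable (G A) in
/-- `A`, together with the Cuntz–Krieger family `F`, is the graph C*-algebra `C*(G)`: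
the family sums to one, generates `A` as a closed *-subalgebra, and is universal. -/
structure IsGraphCStarAlgebra (F : CKFamily G A) : Prop where
  sum_one : ∑ v : G.V, F.P v = 1
  generates :
    (StarAlgebra.adjoin ℂ (Set.range F.P ∪ Set.range F.S)).topologicalClosure = ⊤
  universal : ∀ (C : Type) [CStarAlgebra C] [PartialOrder C] [StarOrderedRing C]
    (F' : CKFamily G C), (∑ v : G.V, F'.P v) = 1 →
      ∃! φ : A →⋆ₐ[ℂ] C, (∀ v, φ (F.P v) = F'.P v) ∧ (∀ e, φ (F.S e) = F'.S e)

/-- The diagonal subalgebra `D_E`: the closed *-subalgebra generated by the `P_μ`. -/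
def CKFamily.DE (F : CKFamily G A) : StarSubalgebra ℂ A :=
  (StarAlgebra.adjoin ℂ {a : A | ∃ μ : G.Path, a = F.pPath μ}).topologicalClosure

/-- `D_E^k`: the linear span of the `P_μ`, `μ ∈ E^k`. -/
noncomputable def CKFamily.DEk (F : CKFamily G A) (k : ℕ) : Submodule ℂ A :=
  Submodule.span ℂ {a : A | ∃ μ : G.Path, μ.len = k ∧ a = F.pPath μ}

/-- The core AF-subalgebra `F_E`: closed linear span of words `S_μ S_ν*` with `|μ| = |ν|`. -/
def CKFamily.FE (F : CKFamily G A) : Set A :=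
  closure ((Submodule.span ℂ
    {a : A | ∃ μ ν : G.Path, μ.len = ν.len ∧ a = F.sPath μ * star (F.sPath ν)}
      : Submodule ℂ A) : Set A)

/-- `F_E^k`: the linear span of words `S_μ S_ν*` with `|μ| = |ν| = k`. -/
noncomputable def CKFamily.FEk (F : CKFamily G A) (k : ℕ) : Submodule ℂ A :=
  Submodule.span ℂ
    {a : A | ∃ μ ν : G.Path, μ.len = k ∧ ν.len = k ∧ a = F.sPath μ * star (F.sPath ν)}

/-- `u ∈ U_E` : `u` is a unitary commuting with all vertex projections. -/
def CKFamily.IsUE (F : CKFamily G A) (u : A) : Prop :=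
  u ∈ unitary A ∧ ∀ v, u * F.P v = F.P v * u

/-- `lam = λ_u` : the endomorphism determined by the unitary `u ∈ U_E`. -/
def CKFamily.IsLambdaU (F : CKFamily G A) (u : A) (lam : A →⋆ₐ[ℂ] A) : Prop :=
  (∀ e, lam (F.S e) = u * F.S e) ∧ (∀ v, lam (F.P v) = F.P v)

/-- The shift `φ(x) = Σ_e S_e x S_e*`. -/
def CKFamily.shift (F : CKFamily G A) (x : A) : A :=
  ∑ e : G.E, F.S e * x * star (F.S e)

/-- `u_k = u φ(u) ⋯ φ^{k-1}(u)` (with `u_0 = 1`). -/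
def CKFamily.ukProd (F : CKFamily G A) (u : A) : ℕ → A
  | 0 => 1
  | m + 1 => F.ukProd u m * F.shift^[m] u

/-- An element is a finite sum of words `S_α S_β*`. -/
def CKFamily.IsSumOfWords (F : CKFamily G A) (a : A) : Prop :=
  ∃ (n : ℕ) (μ ν : Fin n → G.Path),
    a = ∑ i, F.sPath (μ i) * star (F.sPath (ν i))

/-- The group `S_E` of unitaries of the form `Σ S_α S_β*`. -/
def CKFamily.SE (F : CKFamily G A) : Set A :=
  {a : A | a ∈ unitary A ∧ F.IsSumOfWords a}

/-- The group `P_E^k` of unitaries of the form `Σ S_α S_β*`, `|α| = |β| = k`. -/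
def CKFamily.PEk (F : CKFamily G A) (k : ℕ) : Set A :=
  {a : A | a ∈ unitary A ∧ ∃ (n : ℕ) (μ ν : Fin n → G.Path),
    (∀ i, (μ i).len = k ∧ (ν i).len = k) ∧
    a = ∑ i, F.sPath (μ i) * star (F.sPath (ν i))}

/-- `P_E = ∪_k P_E^k`. -/
def CKFamily.PE (F : CKFamily G A) : Set A := ⋃ k : ℕ, F.PEk k

/-- `γ_z` on generators: `γ (S e) = z • S e`, `γ (P v) = P v`. -/
def CKFamily.IsGaugeHom (F : CKFamily G A) (z : ℂ) (ρ : A →⋆ₐ[ℂ] A) : Prop :=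
  (∀ e, ρ (F.S e) = z • F.S e) ∧ (∀ v, ρ (F.P v) = F.P v)

/-- `γ_z` as an automorphism, on generators. -/
def CKFamily.IsGaugeAut (F : CKFamily G A) (z : ℂ) (γ : A ≃⋆ₐ[ℂ] A) : Prop :=
  (∀ e, γ (F.S e) = z • F.S e) ∧ (∀ v, γ (F.P v) = F.P v)

/-- The automorphism `α` of `C*(E)` is induced by an automorphism of the graph `E`. -/
def CKFamily.IsGraphInduced (F : CKFamily G A) (α : A ≃⋆ₐ[ℂ] A) : Prop :=
  ∃ (φV : G.V ≃ G.V) (φE : G.E ≃ G.E),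
    (∀ e, G.s (φE e) = φV (G.s e)) ∧ (∀ e, G.r (φE e) = φV (G.r e)) ∧
    (∀ e, α (F.S e) = F.S (φE e)) ∧ (∀ v, α (F.P v) = F.P (φV v))

/-- Membership in the subgroup `𝔊_E` of `Aut (C*(E))` generated by the graph
automorphisms `Γ_E` together with the automorphisms `λ_u`, `u ∈ S_E ∩ U_E`. -/
inductive CKFamily.InGG (F : CKFamily G A) : (A ≃⋆ₐ[ℂ] A) → Prop
  | gamma (α : A ≃⋆ₐ[ℂ] A) : F.IsGraphInduced α → F.InGG α
  | lam (α : A ≃⋆ₐ[ℂ] A) (u : A) : u ∈ F.SE → F.IsUE u →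
      (∀ e, α (F.S e) = u * F.S e) → (∀ v, α (F.P v) = F.P v) → F.InGG α
  | one : F.InGG (StarAlgEquiv.refl _ _)
  | mul (α β : A ≃⋆ₐ[ℂ] A) : F.InGG α → F.InGG β → F.InGG (α.trans β)
  | inv (α : A ≃⋆ₐ[ℂ] A) : F.InGG α → F.InGG α.symm

/-- Membership in the subgroup `𝔊ℜ_E` of `Aut (C*(E))` generated by the graph
automorphisms `Γ_E` together with the automorphisms `λ_u`, `u ∈ P_E ∩ U_E`. -/
inductive CKFamily.InGGR (F : CKFamily G A) : (A ≃⋆ₐ[ℂ] A) → Prop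
  | gamma (α : A ≃⋆ₐ[ℂ] A) : F.IsGraphInduced α → F.InGGR α
  | lam (α : A ≃⋆ₐ[ℂ] A) (u : A) : u ∈ F.PE → F.IsUE u →
      (∀ e, α (F.S e) = u * F.S e) → (∀ v, α (F.P v) = F.P v) → F.InGGR α
  | one : F.InGGR (StarAlgEquiv.refl _ _)
  | mul (α β : A ≃⋆ₐ[ℂ] A) : F.InGGR α → F.InGGR β → F.InGGR (α.trans β)
  | inv (α : A ≃⋆ₐ[ℂ] A) : F.InGGR α → F.InGGR α.symm


/-- The map `a^u_{e,f}(x) = S_e* u* x u S_f`. -/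
def CKFamily.amap (F : CKFamily G A) (u : A) (e f : G.E) (x : A) : A :=
  star (F.S e) * (star u * x * u) * F.S f

/-- Composition of the maps `a^u_{e,f}` along a list of pairs of edges. -/
def CKFamily.acomp (F : CKFamily G A) (u : A) : List (G.E × G.E) → A → A
  | [], x => x
  | p :: t, x => F.amap u p.1 p.2 (F.acomp u t x)

/-- The spaces `Ξ_r`: `Ξ_0 = F_E^{k-1}`, `Ξ_r = λ_u(H)* Ξ_{r-1} λ_u(H)`. -/
noncomputable def CKFamily.Xi (F : CKFamily G A) (u : A) (k : ℕ) : ℕ → Submodule ℂ A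
  | 0 => F.FEk (k - 1)
  | r + 1 => Submodule.span ℂ
      {a : A | ∃ x ∈ F.Xi u k r, ∃ e f : G.E, a = star (u * F.S e) * x * (u * F.S f)}

/-- The spaces `Ξ_r^D`: `Ξ_0^D = D_E^{k-1}`, `Ξ_r^D = λ_u(H)* Ξ_{r-1}^D λ_u(H)`. -/
noncomputable def CKFamily.XiD (F : CKFamily G A) (u : A) (k : ℕ) : ℕ → Submodule ℂ A
  | 0 => F.DEk (k - 1)
  | r + 1 => Submodule.span ℂ
      {a : A | ∃ x ∈ F.XiD u k r, ∃ e f : G.E, a = star (u * F.S e) * x * (u * F.S f)}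

end FinDirGraph

/-! ### Auxiliary lemmas -/

namespace FinDirGraph

namespace CKFamily

variable {G : FinDirGraph} {A : Type} [CStarAlgebra A] [PartialOrder A] [StarOrderedRing A]

/-- If `star t * t` is an idempotent `p`, then `t * p = t`. -/
lemma aux_mul_proj {t p : A} (hp : p * p = p) (ht : star t * t = p) : t * p = t := by
  have hps : star p = p := by rw [← ht, star_mul, star_star]
  have h0 : star (t * p - t) * (t * p - t) = 0 := by
    have : star (t * p - t) * (t * p - t)
        = p * (star t * t) * p - p * (star t * t) - (star t * t) * p + star t * t := by
      rw [star_sub, star_mul, hps]; noncomm_ring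
    rw [ht, hp, hp] at this
    rw [this]; abel
  have := (CStarRing.star_mul_self_eq_zero_iff _).mp h0
  have := sub_eq_zero.mp this
  exact this

/-- A projection dominated by a projection is absorbed by it. -/
lemma aux_proj_dom {p q : A} (hp : p * p = p) (hps : star p = p)
    (hq : q * q = q) (hqs : star q = q)
    (hle : q ≤ p) : p * q = q := by
  have hconj : star q * q * q ≤ star q * p * q := star_left_conjugate_le_conjugate hle q
  rw [hqs, hq, hq] at hconj
  have h0 : star ((1 - p) * q) * ((1 - p) * q) = 0 := by
    have hexp : star ((1 - p) * q) * ((1 - p) * q) = q - q * p * q := by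
      have hpp : (1 - p) * (1 - p) = 1 - p := by
        have : (1 - p) * (1 - p) = 1 - p - p + p * p := by noncomm_ring
        rw [this, hp]; abel
      calc star ((1 - p) * q) * ((1 - p) * q)
          = q * ((1 - p) * (1 - p)) * q := by
            rw [star_mul, star_sub, star_one, hps, hqs]; noncomm_ring
        _ = q * (1 - p) * q := by rw [hpp]
        _ = q - q * p * q := by rw [mul_sub, mul_one, sub_mul, hq]
    rw [hexp]
    have h1 : q - q * p * q ≤ 0 := sub_nonpos.mpr hconj
    have h2 : (0 : A) ≤ q - q * p * q := by
      have := star_mul_self_nonneg ((1 - p) * q)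
      rwa [hexp] at this
    exact le_antisymm h1 h2
  have := (CStarRing.star_mul_self_eq_zero_iff _).mp h0
  have h3 : q - p * q = 0 := by
    have : (1 - p) * q = q - p * q := by rw [sub_mul, one_mul]
    rwa [this] at ‹(1 - p) * q = 0›
  have := sub_eq_zero.mp h3
  exact this.symm

variable (F : CKFamily G A)

lemma S_mul_P (e : G.E) : F.S e * F.P (G.r e) = F.S e :=
  aux_mul_proj (F.proj_idem _) (F.ck1 e)

lemma SeSe_idem (e : G.E) : (F.S e * star (F.S e)) * (F.S e * star (F.S e))
    = F.S e * star (F.S e) := by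
  rw [mul_assoc, ← mul_assoc (star (F.S e)), F.ck1, ← mul_assoc, F.S_mul_P]

lemma P_mul_S (e : G.E) : F.P (G.s e) * F.S e = F.S e := by
  have hq : (F.S e * star (F.S e)) * (F.S e * star (F.S e)) = F.S e * star (F.S e) :=
    F.SeSe_idem e
  have hqs : star (F.S e * star (F.S e)) = F.S e * star (F.S e) := by
    rw [star_mul, star_star]
  have habs : F.P (G.s e) * (F.S e * star (F.S e)) = F.S e * star (F.S e) :=
    aux_proj_dom (F.proj_idem _) (F.proj_sa _) hq hqs (F.ck2 e)
  have hs : F.S e * star (F.S e) * F.S e = F.S e := by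
    rw [mul_assoc, F.ck1, F.S_mul_P]
  calc F.P (G.s e) * F.S e = F.P (G.s e) * (F.S e * star (F.S e) * F.S e) := by rw [hs]
    _ = F.P (G.s e) * (F.S e * star (F.S e)) * F.S e := by rw [← mul_assoc]
    _ = F.S e * star (F.S e) * F.S e := by rw [habs]
    _ = F.S e := hs

lemma P_mul_sFrom : ∀ (v : G.V) (l : List G.E), G.IsPathFrom v l →
    F.P v * F.sFrom v l = F.sFrom v l
  | v, [], _ => F.proj_idem v
  | v, e :: l, h => by
    obtain ⟨h1, _h2⟩ := h
    subst h1
    show F.P (G.s e) * (F.S e * F.sFrom (G.r e) l) = F.S e * F.sFrom (G.r e) l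
    rw [← mul_assoc, F.P_mul_S]

lemma pPath_sa (μ : G.Path) : star (F.pPath μ) = F.pPath μ := by
  rw [pPath, star_mul, star_star]

lemma P_mul_pPath (μ : G.Path) : F.P μ.src * F.pPath μ = F.pPath μ := by
  rw [pPath, sPath, ← mul_assoc, F.P_mul_sFrom μ.src μ.edges μ.ok]

lemma P_mul_pPath_ne {v : G.V} {μ : G.Path} (h : v ≠ μ.src) :
    F.P v * F.pPath μ = 0 := by
  rw [← F.P_mul_pPath μ, ← mul_assoc, F.orth v μ.src h, zero_mul]

lemma P_comm_pPath (v : G.V) (μ : G.Path) :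
    F.P v * F.pPath μ = F.pPath μ * F.P v := by
  have h1 : F.pPath μ * F.P v = star (F.P v * F.pPath μ) := by
    rw [star_mul, F.pPath_sa, F.proj_sa]
  by_cases h : v = μ.src
  · subst h; rw [h1, F.P_mul_pPath, F.pPath_sa]
  · rw [h1, F.P_mul_pPath_ne h, star_zero]

/-- The trivial path at a vertex. -/
def vPath (v : G.V) : G.Path := ⟨v, [], trivial⟩

lemma pPath_vPath (v : G.V) : F.pPath (vPath v) = F.P v := by
  show F.P v * star (F.P v) = F.P v
  rw [F.proj_sa, F.proj_idem]

/-- Prepending an edge to a path. -/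
def consPath (e : G.E) (μ : G.Path) (h : μ.src = G.r e) : G.Path :=
  ⟨G.s e, e :: μ.edges, ⟨rfl, by rw [← h]; exact μ.ok⟩⟩

lemma pPath_consPath (e : G.E) (μ : G.Path) (h : μ.src = G.r e) :
    F.pPath (consPath e μ h) = F.S e * F.pPath μ * star (F.S e) := by
  obtain ⟨v, l, ok⟩ := μ
  dsimp only [Path.src] at h
  subst h
  show (F.S e * F.sFrom (G.r e) l) * star (F.S e * F.sFrom (G.r e) l)
      = F.S e * (F.sFrom (G.r e) l * star (F.sFrom (G.r e) l)) * star (F.S e)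
  rw [star_mul]; noncomm_ring

lemma isClosed_DE : IsClosed ((F.DE : Set A)) :=
  StarSubalgebra.isClosed_topologicalClosure _

lemma pPath_mem_DE (μ : G.Path) : F.pPath μ ∈ F.DE :=
  StarSubalgebra.le_topologicalClosure _ (StarAlgebra.subset_adjoin ℂ _ ⟨μ, rfl⟩)

lemma P_mem_DE (v : G.V) : F.P v ∈ F.DE := by
  rw [← F.pPath_vPath v]; exact F.pPath_mem_DE _

lemma SeSe_mem_DE (e : G.E) : F.S e * star (F.S e) ∈ F.DE := by
  have := F.pPath_consPath e (vPath (G.r e)) rfl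
  rw [F.pPath_vPath, F.S_mul_P] at this
  rw [← this]; exact F.pPath_mem_DE _

/-- Every element of `D_E` commutes with the vertex projections. -/
lemma DE_comm {x : A} (hx : x ∈ F.DE) (v : G.V) : x * F.P v = F.P v * x := by
  let C : StarSubalgebra ℂ A :=
    { carrier := {x | x * F.P v = F.P v * x}
      mul_mem' := by
        intro a b ha hb
        simp only [Set.mem_setOf_eq] at *
        rw [mul_assoc, hb, ← mul_assoc, ha, mul_assoc]
      add_mem' := by
        intro a b ha hb
        simp only [Set.mem_setOf_eq] at *
        rw [add_mul, mul_add, ha, hb]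
      algebraMap_mem' := fun c => (Algebra.commutes c _)
      star_mem' := by
        intro a ha
        simp only [Set.mem_setOf_eq] at *
        have h2 : star (F.P v * a) = star (a * F.P v) := by rw [ha]
        rw [star_mul, star_mul, F.proj_sa] at h2
        exact h2 }
  have hC : IsClosed (C : Set A) := by
    have : (C : Set A) = {x | x * F.P v = F.P v * x} := rfl
    rw [this]
    exact isClosed_eq (continuous_id.mul continuous_const) (continuous_const.mul continuous_id)
  have hle : F.DE ≤ C := by
    apply StarSubalgebra.topologicalClosure_minimal _ hC
    apply StarAlgebra.adjoin_le
    rintro a ⟨μ, rfl⟩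
    exact (F.P_comm_pPath v μ).symm
  exact hle hx

/-- `S_e D_E S_e* ⊆ D_E`. -/
lemma Se_conj_DE (e : G.E) {x : A} (hx : x ∈ F.DE) :
    F.S e * x * star (F.S e) ∈ F.DE := by
  have hPstar : F.P (G.r e) * star (F.S e) = star (F.S e) := by
    rw [← F.proj_sa, ← star_mul, F.S_mul_P]
  let T : StarSubalgebra ℂ A :=
    { carrier := {x | x ∈ F.DE ∧ F.S e * x * star (F.S e) ∈ F.DE}
      mul_mem' := by
        intro a b ha hb
        refine ⟨mul_mem ha.1 hb.1, ?_⟩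
        have h1 : star (F.S e) * (F.S e * b) = F.P (G.r e) * b := by
          rw [← mul_assoc, F.ck1]
        have h2 : F.P (G.r e) * b = b * F.P (G.r e) := (F.DE_comm hb.1 _).symm
        have key : (F.S e * a * star (F.S e)) * (F.S e * b * star (F.S e))
            = F.S e * (a * b) * star (F.S e) :=
          calc (F.S e * a * star (F.S e)) * (F.S e * b * star (F.S e))
              = F.S e * a * (star (F.S e) * (F.S e * b)) * star (F.S e) := by noncomm_ring
            _ = F.S e * a * (b * F.P (G.r e)) * star (F.S e) := by rw [h1, h2]
            _ = F.S e * (a * b) * (F.P (G.r e) * star (F.S e)) := by noncomm_ring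
            _ = F.S e * (a * b) * star (F.S e) := by rw [hPstar]
        rw [← key]
        exact mul_mem ha.2 hb.2
      add_mem' := by
        intro a b ha hb
        refine ⟨add_mem ha.1 hb.1, ?_⟩
        have : F.S e * (a + b) * star (F.S e)
            = F.S e * a * star (F.S e) + F.S e * b * star (F.S e) := by noncomm_ring
        rw [this]; exact add_mem ha.2 hb.2
      algebraMap_mem' := by
        intro c
        refine ⟨algebraMap_mem _ c, ?_⟩
        have : F.S e * algebraMap ℂ A c * star (F.S e)
            = c • (F.S e * star (F.S e)) := by
          rw [Algebra.algebraMap_eq_smul_one, mul_smul_comm, mul_one, smul_mul_assoc]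
        rw [this]
        exact SMulMemClass.smul_mem c (F.SeSe_mem_DE e)
      star_mem' := by
        intro a ha
        refine ⟨star_mem ha.1, ?_⟩
        have : F.S e * star a * star (F.S e) = star (F.S e * a * star (F.S e)) := by
          rw [star_mul, star_mul, star_star]; noncomm_ring
        rw [this]; exact star_mem ha.2 }
  have hT : IsClosed (T : Set A) := by
    have h1 : (T : Set A) = (F.DE : Set A) ∩
        ((fun x => F.S e * x * star (F.S e)) ⁻¹' (F.DE : Set A)) := rfl
    rw [h1]
    exact (F.isClosed_DE).inter
      ((F.isClosed_DE).preimage ((continuous_const.mul continuous_id).mul continuous_const))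
  have hle : F.DE ≤ T := by
    apply StarSubalgebra.topologicalClosure_minimal _ hT
    apply StarAlgebra.adjoin_le
    rintro a ⟨μ, rfl⟩
    refine ⟨F.pPath_mem_DE μ, ?_⟩
    by_cases h : μ.src = G.r e
    · rw [← F.pPath_consPath e μ h]
      exact F.pPath_mem_DE _
    · have h0 : F.S e * F.pPath μ = 0 := by
        have h1 : F.S e * F.P μ.src = 0 := by
          rw [← F.S_mul_P e, mul_assoc, F.orth _ _ (fun hh => h hh.symm), mul_zero]
        rw [← F.P_mul_pPath μ, ← mul_assoc, h1, zero_mul]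
      rw [h0, zero_mul]
      exact zero_mem _
  exact (hle hx).2

/-- A continuous star-algebra endomorphism mapping the generators of `D_E` into
`D_E` maps `D_E` into `D_E`. -/
lemma hom_maps_DE (φ : A →⋆ₐ[ℂ] A) (h : ∀ μ : G.Path, φ (F.pPath μ) ∈ F.DE) :
    ∀ d ∈ F.DE, φ d ∈ F.DE := by
  have hc : Continuous φ :=
    AddMonoidHomClass.continuous_of_bound φ 1
      (fun a => by simpa only [one_mul] using NonUnitalStarAlgHom.norm_apply_le φ a)
  have hle : F.DE ≤ StarSubalgebra.comap φ F.DE := by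
    apply StarSubalgebra.topologicalClosure_minimal
    · apply StarAlgebra.adjoin_le
      rintro a ⟨μ, rfl⟩
      exact h μ
    · exact (F.isClosed_DE).preimage hc
  exact fun d hd => hle hd

end CKFamily

end FinDirGraph



open FinDirGraph in
/-- Proposition 3.1 (normalDautos). -/
theorem stmt_0 (G : FinDirGraph) (hns : G.NoSinks)
    (A : Type) [CStarAlgebra A] [PartialOrder A] [StarOrderedRing A]
    (F : CKFamily G A) (hGA : IsGraphCStarAlgebra G A F)
    (u : A) (hu : F.IsUE u) (lam : A →⋆ₐ[ℂ] A) (hlam : F.IsLambdaU u lam) :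
    ((∀ d ∈ F.DE, u * d * star u ∈ F.DE) → ∀ d ∈ F.DE, lam d ∈ F.DE) ∧
    (⇑lam '' (F.DE : Set A) = (F.DE : Set A) → ∀ d ∈ F.DE, u * d * star u ∈ F.DE) := by
  obtain ⟨huU, huC⟩ := hu
  have huu : star u * u = 1 := (Unitary.mem_iff.mp huU).1
  have huu' : u * star u = 1 := (Unitary.mem_iff.mp huU).2
  constructor
  · -- Part (1)
    intro h
    apply F.hom_maps_DE lam
    have key : ∀ (l : List G.E) (v : G.V) (ok : G.IsPathFrom v l),
        lam (F.pPath ⟨v, l, ok⟩) ∈ F.DE := by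
      intro l
      induction l with
      | nil =>
        intro v _ok
        have : lam (F.pPath (CKFamily.vPath v)) ∈ F.DE := by
          rw [F.pPath_vPath v, hlam.2 v]
          exact F.P_mem_DE v
        exact this
      | cons e l ih =>
        intro v ok
        have ok' : G.s e = v ∧ G.IsPathFrom (G.r e) l := ok
        obtain ⟨h1, h2⟩ := ok'
        subst h1
        have hin : lam (F.pPath ⟨G.r e, l, h2⟩) ∈ F.DE := ih (G.r e) h2
        have hmem : u * (F.S e * lam (F.pPath ⟨G.r e, l, h2⟩) * star (F.S e)) * star u ∈ F.DE :=
          h _ (F.Se_conj_DE e hin)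
        have goal' : lam (F.pPath (CKFamily.consPath e ⟨G.r e, l, h2⟩ rfl)) ∈ F.DE := by
          rw [F.pPath_consPath e ⟨G.r e, l, h2⟩ rfl, map_mul, map_mul, map_star, hlam.1 e]
          have heq : u * F.S e * lam (F.pPath ⟨G.r e, l, h2⟩) * star (u * F.S e)
              = u * (F.S e * lam (F.pPath ⟨G.r e, l, h2⟩) * star (F.S e)) * star u := by
            rw [star_mul]; noncomm_ring
          rw [heq]
          exact hmem
        exact goal'
    intro μ
    obtain ⟨v, l, ok⟩ := μ
    exact key l v ok
  · -- Part (2)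
    intro himg
    -- the conjugation map is a star-algebra homomorphism
    let Φ : A →⋆ₐ[ℂ] A :=
      { toFun := fun x => u * x * star u
        map_one' := by show u * 1 * star u = 1; rw [mul_one, huu']
        map_mul' := by
          intro x y
          show u * (x * y) * star u = (u * x * star u) * (u * y * star u)
          calc u * (x * y) * star u = u * (x * (star u * u) * y) * star u := by
                rw [huu, mul_one]
            _ = u * x * star u * (u * y * star u) := by noncomm_ring
        map_zero' := by show u * 0 * star u = 0; rw [mul_zero, zero_mul]
        map_add' := by
          intro x y
          show u * (x + y) * star u = u * x * star u + u * y * star u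
          rw [mul_add, add_mul]
        commutes' := by
          intro c
          show u * algebraMap ℂ A c * star u = algebraMap ℂ A c
          rw [Algebra.algebraMap_eq_smul_one, mul_smul_comm, mul_one, smul_mul_assoc, huu']
        map_star' := by
          intro x
          show u * star x * star u = star (u * x * star u)
          rw [star_mul, star_mul, star_star]; noncomm_ring }
    have hΦ : ∀ d ∈ F.DE, u * d * star u ∈ F.DE := by
      apply F.hom_maps_DE Φ
      intro μ
      show u * F.pPath μ * star u ∈ F.DE
      obtain ⟨v, l, ok⟩ := μ
      cases l with
      | nil =>
        have : u * F.pPath (CKFamily.vPath v) * star u ∈ F.DE := by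
          rw [F.pPath_vPath v, huC v, mul_assoc, huu', mul_one]
          exact F.P_mem_DE v
        exact this
      | cons e l =>
        have ok' : G.s e = v ∧ G.IsPathFrom (G.r e) l := ok
        obtain ⟨h1, h2⟩ := ok'
        subst h1
        have htail : F.pPath ⟨G.r e, l, h2⟩ ∈ F.DE := F.pPath_mem_DE _
        have htail' : F.pPath ⟨G.r e, l, h2⟩ ∈ ⇑lam '' (F.DE : Set A) := by
          rw [himg]; exact htail
        obtain ⟨d, hd, hld⟩ := htail'
        have hmem : lam (F.S e * d * star (F.S e)) ∈ F.DE := by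
          have h3 : F.S e * d * star (F.S e) ∈ F.DE := F.Se_conj_DE e hd
          have h4 : lam (F.S e * d * star (F.S e)) ∈ ⇑lam '' (F.DE : Set A) :=
            ⟨_, h3, rfl⟩
          rwa [himg] at h4
        have heq : lam (F.S e * d * star (F.S e))
            = u * F.pPath (CKFamily.consPath e ⟨G.r e, l, h2⟩ rfl) * star u := by
          rw [map_mul, map_mul, map_star, hlam.1 e, hld,
            F.pPath_consPath e ⟨G.r e, l, h2⟩ rfl, star_mul]
          noncomm_ring
        rw [heq] at hmem
        exact hmem
    exact hΦ
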